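/- Let I be an unmixed (full-supported) matroidal ideal of degree d = 2 in R = k[x_1,...,x_n], and let m be the number of blocks in the partition S_1,...,S_m of the variable set associated to I (where, for a minimal irredundant intersection I = ∩_{i=1}^m (I : x_i), one sets S_i = [n] \ G(I : x_i)). Then the number of associated primes of R/I equals m, i.e., |Ass(R/I)| = m. -/

import Mathlib

open MvPolynomial

namespace PaperDefs

variable {k : Type*} [Field k] {n : ℕ}

/-- The total degree of an exponent vector. -/
def edeg (a : Fin n →₀ ℕ) : ℕ := ∑ i, a i

/-- `I` is a monomial ideal: it is generated by a set of monomials. -/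
def IsMonomialIdeal (I : Ideal (MvPolynomial (Fin n) k)) : Prop :=
  ∃ S : Set (Fin n →₀ ℕ),
    I = Ideal.span ((fun a => (MvPolynomial.monomial a (1 : k))) '' S)

/-- The (exponent vectors of the) unique minimal monomial generating set `G(I)`:
monomials of `I` that are minimal with respect to divisibility. -/
def minGens (I : Ideal (MvPolynomial (Fin n) k)) : Set (Fin n →₀ ℕ) :=
  {a | (MvPolynomial.monomial a (1 : k)) ∈ I ∧
    ∀ b : Fin n →₀ ℕ, b < a → (MvPolynomial.monomial b (1 : k)) ∉ I}

/-- A squarefree exponent vector. -/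
def SqFree (a : Fin n →₀ ℕ) : Prop := ∀ i, a i ≤ 1

/-- `I` is a polymatroidal ideal of degree `d`. -/
def IsPolymatroidal (I : Ideal (MvPolynomial (Fin n) k)) (d : ℕ) : Prop :=
  IsMonomialIdeal I ∧ I ≠ ⊥ ∧
  (∀ a ∈ minGens I, edeg a = d) ∧
  ∀ a ∈ minGens I, ∀ b ∈ minGens I, ∀ i : Fin n, b i < a i →
    ∃ j : Fin n, a j < b j ∧
      (MvPolynomial.monomial (a - Finsupp.single i 1 + Finsupp.single j 1) (1 : k)) ∈ I

/-- `I` is a matroidal ideal of degree `d`: a squarefree polymatroidal ideal. -/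
def IsMatroidal (I : Ideal (MvPolynomial (Fin n) k)) (d : ℕ) : Prop :=
  IsPolymatroidal I d ∧ ∀ a ∈ minGens I, SqFree a

/-- `I` is full-supported: every variable divides some minimal generator. -/
def FullSupported (I : Ideal (MvPolynomial (Fin n) k)) : Prop :=
  ∀ i : Fin n, ∃ a ∈ minGens I, a i ≠ 0

/-- The maximal graded ideal `(x_1, ..., x_n)`. -/
noncomputable def varIdeal (k : Type*) [Field k] (n : ℕ) : Ideal (MvPolynomial (Fin n) k) :=
  Ideal.span (Set.range MvPolynomial.X)

/-- The colon ideal `(I : x_i)`. -/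
noncomputable def colonVar (I : Ideal (MvPolynomial (Fin n) k)) (i : Fin n) :
    Ideal (MvPolynomial (Fin n) k) :=
  I.colon ((Ideal.span {MvPolynomial.X i} : Ideal (MvPolynomial (Fin n) k)) : Set (MvPolynomial (Fin n) k))

/-- The height of an ideal: the infimum of `Order.height` over the primes containing it. -/
noncomputable def ht {R : Type*} [CommRing R] (I : Ideal R) : ℕ∞ :=
  ⨅ (p : PrimeSpectrum R) (_ : I ≤ p.asIdeal), Order.height p

/-- `I` is unmixed: all associated primes of `R/I` have the same height. -/
def IsUnmixed (I : Ideal (MvPolynomial (Fin n) k)) : Prop :=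
  ∀ p ∈ associatedPrimes (MvPolynomial (Fin n) k) (MvPolynomial (Fin n) k ⧸ I),
    ∀ q ∈ associatedPrimes (MvPolynomial (Fin n) k) (MvPolynomial (Fin n) k ⧸ I),
      ht p = ht q

/-- The arithmetical rank of `I`. -/
noncomputable def ara (I : Ideal (MvPolynomial (Fin n) k)) : ℕ :=
  sInf {t : ℕ | ∃ f : Fin t → MvPolynomial (Fin n) k,
    (Ideal.span (Set.range f)).radical = I.radical}

/-- The squarefree Veronese ideal of degree `d`. -/
noncomputable def sqfreeVeronese (k : Type*) [Field k] (n d : ℕ) : Ideal (MvPolynomial (Fin n) k) :=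
  Ideal.span ((fun s : Finset (Fin n) => ∏ i ∈ s, MvPolynomial.X i) ''
    {s : Finset (Fin n) | s.card = d})

/-- The depth of `R/I` : the supremum of lengths of `R/I`-regular sequences consisting of
elements of the maximal graded ideal. -/
noncomputable def quotDepth (I : Ideal (MvPolynomial (Fin n) k)) : ℕ :=
  sSup {r : ℕ | ∃ rs : List (MvPolynomial (Fin n) k), rs.length = r ∧
    (∀ x ∈ rs, x ∈ varIdeal k n) ∧
    RingTheory.Sequence.IsRegular (MvPolynomial (Fin n) k ⧸ I) rs}

/-- `R/I` is Cohen–Macaulay: the depth of `R/I` equals its Krull dimension. -/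
def IsCohenMacaulayQuot (I : Ideal (MvPolynomial (Fin n) k)) : Prop :=
  (quotDepth I : WithBot ℕ∞) = ringKrullDim (MvPolynomial (Fin n) k ⧸ I)

end PaperDefs

namespace StatementFive

open PaperDefs Finsupp

variable {k : Type*} [Field k] {n : ℕ} {I : Ideal (MvPolynomial (Fin n) k)}

lemma monomial_mem_of_le {a b : Fin n →₀ ℕ} (hab : a ≤ b)
    (ha : monomial a (1 : k) ∈ I) : monomial b (1 : k) ∈ I := by
  have h : monomial b (1 : k) = monomial (b - a) (1 : k) * monomial a (1 : k) := by
    rw [monomial_mul, one_mul, tsub_add_cancel_of_le hab]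
  rw [h]
  exact Ideal.mul_mem_left _ _ ha

lemma exists_minGen_le (hI : IsMonomialIdeal I) {a : Fin n →₀ ℕ}
    (ha : monomial a (1 : k) ∈ I) : ∃ g ∈ minGens I, g ≤ a := by
  obtain ⟨S, rfl⟩ := hI
  have hsup : a ∈ (monomial a (1 : k)).support := by
    rw [MvPolynomial.mem_support_iff, coeff_monomial, if_pos rfl]
    exact one_ne_zero
  obtain ⟨s, hs, hsa⟩ := mem_ideal_span_monomial_image.mp ha a hsup
  have hSne : {b : Fin n →₀ ℕ |
      monomial b (1 : k) ∈ Ideal.span ((fun a => monomial a (1 : k)) '' S) ∧ b ≤ s}.Nonempty :=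
    ⟨s, Ideal.subset_span ⟨s, hs, rfl⟩, le_rfl⟩
  obtain ⟨g, ⟨hgI, hgs⟩, hmin⟩ := wellFounded_lt.has_min _ hSne
  exact ⟨g, ⟨hgI, fun b hb hbI => hmin b ⟨hbI, hb.le.trans hgs⟩ hb⟩, hgs.trans hsa⟩

lemma monomial_mem_of_mem_support (hI : IsMonomialIdeal I) {f : MvPolynomial (Fin n) k}
    (hf : f ∈ I) {m : Fin n →₀ ℕ} (hm : m ∈ f.support) : monomial m (1 : k) ∈ I := by
  obtain ⟨S, rfl⟩ := hI
  obtain ⟨s, hs, hsm⟩ := mem_ideal_span_monomial_image.mp hf m hm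
  exact monomial_mem_of_le hsm (Ideal.subset_span ⟨s, hs, rfl⟩)

lemma edeg_mono {a b : Fin n →₀ ℕ} (h : a ≤ b) : edeg a ≤ edeg b :=
  Finset.sum_le_sum fun i _ => Finsupp.le_def.mp h i

lemma edeg_strict_mono {a b : Fin n →₀ ℕ} (h : b < a) : edeg b < edeg a := by
  obtain ⟨i, hi⟩ : ∃ i, b i < a i := by
    by_contra hc
    push_neg at hc
    exact h.ne (Finsupp.ext fun i => le_antisymm (Finsupp.le_def.mp h.le i) (hc i))
  exact Finset.sum_lt_sum (fun i _ => Finsupp.le_def.mp h.le i) ⟨i, Finset.mem_univ i, hi⟩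

lemma mem_minGens_of_deg2 (hI : IsMatroidal I 2) {a : Fin n →₀ ℕ}
    (haI : monomial a (1 : k) ∈ I) (ha : edeg a = 2) : a ∈ minGens I := by
  refine ⟨haI, fun b hb hbI => ?_⟩
  obtain ⟨g, hg, hgb⟩ := exists_minGen_le hI.1.1 hbI
  have h2 : edeg g = 2 := hI.1.2.2.1 g hg
  have h3 : edeg g ≤ edeg b := edeg_mono hgb
  have h4 : edeg b < edeg a := edeg_strict_mono hb
  omega

lemma edeg_single (i : Fin n) : edeg (Finsupp.single i 1) = 1 := by
  simp [edeg, Finsupp.single_apply]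

lemma edeg_add (a b : Fin n →₀ ℕ) : edeg (a + b) = edeg a + edeg b := by
  unfold edeg
  simp [Finset.sum_add_distrib]

lemma eq_single_of_edeg_one {a : Fin n →₀ ℕ} (h : edeg a = 1) :
    ∃ q, a = Finsupp.single q 1 := by
  obtain ⟨q, hq⟩ : ∃ q, a q ≠ 0 := by
    by_contra hc
    push_neg at hc
    have : edeg a = 0 := Finset.sum_eq_zero fun i _ => hc i
    omega
  have hsum : a q + ∑ x ∈ Finset.univ.erase q, a x = 1 := by
    rw [Finset.add_sum_erase _ _ (Finset.mem_univ q)]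
    exact h
  have haq : a q = 1 := by omega
  have hrest : ∀ x ∈ Finset.univ.erase q, a x = 0 := by
    rw [← Finset.sum_eq_zero_iff]
    omega
  refine ⟨q, Finsupp.ext fun i => ?_⟩
  by_cases hiq : i = q
  · subst hiq; simp [haq]
  · rw [Finsupp.single_apply, if_neg (Ne.symm hiq)]
    exact hrest i (Finset.mem_erase.mpr ⟨hiq, Finset.mem_univ i⟩)

lemma exists_pair {a : Fin n →₀ ℕ} (ha : edeg a = 2) (hsq : SqFree a) :
    ∃ p q, p ≠ q ∧ a = Finsupp.single p 1 + Finsupp.single q 1 := by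
  obtain ⟨p, hp⟩ : ∃ p, a p ≠ 0 := by
    by_contra hc
    push_neg at hc
    have : edeg a = 0 := Finset.sum_eq_zero fun i _ => hc i
    omega
  have hap : a p = 1 := le_antisymm (hsq p) (Nat.one_le_iff_ne_zero.mpr hp)
  have hle : Finsupp.single p 1 ≤ a := by
    rw [Finsupp.le_def]
    intro i
    rcases eq_or_ne p i with rfl | hne
    · simp [hap]
    · simp [Finsupp.single_apply, hne]
  set b := a - Finsupp.single p 1 with hb
  have hba : b + Finsupp.single p 1 = a := tsub_add_cancel_of_le hle
  have hedb : edeg b = 1 := by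
    have h := edeg_add b (Finsupp.single p 1)
    rw [hba, edeg_single, ha] at h
    omega
  obtain ⟨q, hq⟩ := eq_single_of_edeg_one hedb
  have hbp : b p = 0 := by
    have h : b p + 1 = a p := by
      simpa [Finsupp.single_apply] using congrFun (congrArg DFunLike.coe hba) p
    omega
  have hpq : p ≠ q := by
    intro hpq
    rw [hq, hpq] at hbp
    simp at hbp
  exact ⟨p, q, hpq, by rw [← hba, hq, add_comm]⟩

/-- The edge relation of the graph underlying a degree-2 matroidal ideal. -/
def E (I : Ideal (MvPolynomial (Fin n) k)) (i j : Fin n) : Prop :=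
  monomial (Finsupp.single i 1 + Finsupp.single j 1) (1 : k) ∈ I

lemma E_symm {i j : Fin n} (h : E I i j) : E I j i := by
  rwa [E, add_comm] at h

lemma edeg_pair {i j : Fin n} (hij : i ≠ j) :
    edeg (Finsupp.single i 1 + Finsupp.single j 1) = 2 := by
  rw [edeg_add, edeg_single, edeg_single]

lemma mem_minGens_of_E (hI : IsMatroidal I 2) {i j : Fin n} (hij : i ≠ j) (h : E I i j) :
    (Finsupp.single i 1 + Finsupp.single j 1) ∈ minGens I :=
  mem_minGens_of_deg2 hI h (edeg_pair hij)

lemma not_E_self (hI : IsMatroidal I 2) (i : Fin n) : ¬ E I i i := by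
  intro h
  rw [E] at h
  obtain ⟨g, hg, hgle⟩ := exists_minGen_le hI.1.1 h
  have hsq : SqFree g := hI.2 g hg
  have h2 : edeg g = 2 := hI.1.2.2.1 g hg
  have hgz : ∀ j, j ≠ i → g j = 0 := by
    intro j hj
    have := Finsupp.le_def.mp hgle j
    simpa [Finsupp.single_apply, Ne.symm hj] using this
  have : edeg g ≤ 1 := by
    calc edeg g = ∑ x, g x := rfl
    _ = g i := Finset.sum_eq_single i (fun b _ hb => hgz b hb)
          (fun hi => absurd (Finset.mem_univ i) hi)
    _ ≤ 1 := hsq i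
  omega

lemma exists_edge (hI : IsMatroidal I 2) (hfull : FullSupported I) (j : Fin n) :
    ∃ t, t ≠ j ∧ E I j t := by
  obtain ⟨g, hg, hgj⟩ := hfull j
  obtain ⟨p, q, hpq, hgpq⟩ := exists_pair (hI.1.2.2.1 g hg) (hI.2 g hg)
  have hjpq : j = p ∨ j = q := by
    rw [hgpq] at hgj
    by_contra hc
    push_neg at hc
    simp [Finsupp.single_apply, Ne.symm hc.1, Ne.symm hc.2] at hgj
  have hmem := hg.1
  rcases hjpq with rfl | rfl
  · exact ⟨q, Ne.symm hpq, by rwa [E, ← hgpq]⟩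
  · refine ⟨p, hpq, ?_⟩
    rw [E, add_comm, ← hgpq]
    exact hmem

lemma rel_trans (hI : IsMatroidal I 2) (hfull : FullSupported I) {a b c : Fin n}
    (hab : ¬ E I a b) (hbc : ¬ E I b c) : ¬ E I a c := by
  intro hac
  rcases eq_or_ne a b with rfl | h1
  · exact hbc hac
  rcases eq_or_ne b c with rfl | h2
  · exact hab hac
  rcases eq_or_ne a c with rfl | h3
  · exact not_E_self hI a hac
  obtain ⟨t, htb, hbt⟩ := exists_edge hI hfull b
  have hta : t ≠ a := by
    rintro rfl
    exact hab (E_symm hbt)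
  have htc : t ≠ c := by
    rintro rfl
    exact hbc hbt
  have hGbt : (Finsupp.single b 1 + Finsupp.single t 1) ∈ minGens I :=
    mem_minGens_of_E hI (Ne.symm htb) hbt
  have hGac : (Finsupp.single a 1 + Finsupp.single c 1) ∈ minGens I :=
    mem_minGens_of_E hI h3 hac
  have hlt : (Finsupp.single a 1 + Finsupp.single c 1 : Fin n →₀ ℕ) t <
      (Finsupp.single b 1 + Finsupp.single t 1 : Fin n →₀ ℕ) t := by
    simp [Finsupp.single_apply, hta.symm, htc.symm, Ne.symm htb]
  obtain ⟨j, hj, hmem⟩ := hI.1.2.2.2 _ hGbt _ hGac t hlt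
  have hjac : j = a ∨ j = c := by
    by_contra hc
    push_neg at hc
    simp [Finsupp.single_apply, Ne.symm hc.1, Ne.symm hc.2] at hj
  have hsub : (Finsupp.single b 1 + Finsupp.single t 1) - Finsupp.single t 1
      = Finsupp.single b 1 := add_tsub_cancel_right _ _
  rw [hsub] at hmem
  rcases hjac with rfl | rfl
  · exact hab (E_symm hmem)
  · exact hbc hmem

lemma span_X_isPrime (s : Set (Fin n)) :
    (Ideal.span (MvPolynomial.X '' s) : Ideal (MvPolynomial (Fin n) k)).IsPrime := by
  classical
  set φ : MvPolynomial (Fin n) k →+* MvPolynomial (Fin n) k :=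
    (aeval (fun j : Fin n => if j ∈ s then 0 else X j)).toRingHom with hφ
  have hφX : ∀ j, φ (X j) = if j ∈ s then 0 else X j := by
    intro j; simp [hφ]
  have key : ∀ f : MvPolynomial (Fin n) k, f - φ f ∈ Ideal.span (MvPolynomial.X '' s) := by
    intro f
    induction f using MvPolynomial.induction_on with
    | C a => simp [hφ]
    | add p q hp hq =>
        have h := Ideal.add_mem _ hp hq
        have heq : p + q - φ (p + q) = p - φ p + (q - φ q) := by
          rw [map_add]; ring
        rwa [heq]
    | mul_X p j hp =>
        have hrw : p * X j - φ (p * X j) = (p - φ p) * X j + φ p * (X j - φ (X j)) := by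
          rw [map_mul]; ring
        rw [hrw]
        refine Ideal.add_mem _ (Ideal.mul_mem_right _ _ hp) ?_
        by_cases hj : j ∈ s
        · rw [hφX j, if_pos hj, sub_zero]
          exact Ideal.mul_mem_left _ _ (Ideal.subset_span ⟨j, hj, rfl⟩)
        · rw [hφX j, if_neg hj, sub_self]
          simp
  have hker : Ideal.span (MvPolynomial.X '' s) = RingHom.ker φ := by
    apply le_antisymm
    · rw [Ideal.span_le]
      rintro _ ⟨j, hj, rfl⟩
      simp [SetLike.mem_coe, RingHom.mem_ker, hφX j, if_pos hj]
    · intro f hf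
      have h := key f
      rw [RingHom.mem_ker] at hf
      rwa [hf, sub_zero] at h
  rw [hker]
  exact RingHom.ker_isPrime φ

lemma X_mem_span_X_iff {s : Set (Fin n)} {j : Fin n} :
    (MvPolynomial.X j : MvPolynomial (Fin n) k) ∈ Ideal.span (MvPolynomial.X '' s) ↔ j ∈ s := by
  rw [mem_ideal_span_X_image]
  constructor
  · intro h
    obtain ⟨i, hi, hij⟩ := h (Finsupp.single j 1) (by rw [support_X]; simp)
    rcases eq_or_ne j i with rfl | hne
    · exact hi
    · rw [Finsupp.single_apply, if_neg hne] at hij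
      exact absurd rfl hij
  · intro h m hm
    rw [support_X, Finset.mem_singleton] at hm
    subst hm
    exact ⟨j, h, by simp⟩

lemma X_mul_X_eq (j i : Fin n) :
    (MvPolynomial.X j : MvPolynomial (Fin n) k) * MvPolynomial.X i
      = monomial (Finsupp.single j 1 + Finsupp.single i 1) 1 := by
  rw [MvPolynomial.X, MvPolynomial.X, monomial_mul, one_mul]

lemma colonVar_eq (hI : IsMatroidal I 2) (hfull : FullSupported I) (i : Fin n) :
    colonVar I i = Ideal.span (MvPolynomial.X '' {j | E I i j}) := by
  apply le_antisymm
  · intro f hf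
    have hfx : f * X i ∈ I := Ideal.mem_colon_span_singleton.mp hf
    rw [mem_ideal_span_X_image]
    intro m hm
    have hsup : m + Finsupp.single i 1 ∈ (f * X i).support := by
      rw [MvPolynomial.mem_support_iff, coeff_mul_X]
      exact MvPolynomial.mem_support_iff.mp hm
    have hmono : monomial (m + Finsupp.single i 1) (1 : k) ∈ I :=
      monomial_mem_of_mem_support hI.1.1 hfx hsup
    obtain ⟨g, hg, hgle⟩ := exists_minGen_le hI.1.1 hmono
    obtain ⟨p, q, hpq, hgpq⟩ := exists_pair (hI.1.2.2.1 g hg) (hI.2 g hg)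
    rw [hgpq] at hgle
    have hval : ∀ x, x ≠ i →
        (Finsupp.single p 1 + Finsupp.single q 1 : Fin n →₀ ℕ) x ≤ m x := by
      intro x hx
      have h := Finsupp.le_def.mp hgle x
      simpa [Finsupp.single_apply, Ne.symm hx] using h
    have hmemI : monomial (Finsupp.single p 1 + Finsupp.single q 1) (1 : k) ∈ I := by
      rw [← hgpq]; exact hg.1
    have honep : (1 : ℕ) ≤ (Finsupp.single p 1 + Finsupp.single q 1 : Fin n →₀ ℕ) p := by
      rw [Finsupp.add_apply, Finsupp.single_apply, if_pos rfl]
      exact Nat.le_add_right 1 _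
    have honeq : (1 : ℕ) ≤ (Finsupp.single p 1 + Finsupp.single q 1 : Fin n →₀ ℕ) q := by
      rw [Finsupp.add_apply]
      have : (Finsupp.single q 1 : Fin n →₀ ℕ) q = 1 := by
        rw [Finsupp.single_apply, if_pos rfl]
      omega
    rcases eq_or_ne p i with rfl | hpi
    · refine ⟨q, hmemI, ?_⟩
      have h2 := le_trans honeq (hval q (Ne.symm hpq))
      omega
    · rcases eq_or_ne q i with rfl | hqi
      · refine ⟨p, E_symm hmemI, ?_⟩
        have h2 := le_trans honep (hval p hpi)
        omega
      · have hp1 : 1 ≤ m p := le_trans honep (hval p hpi)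
        have hq1 : 1 ≤ m q := le_trans honeq (hval q hqi)
        have hor : E I i p ∨ E I i q := by
          by_contra hc
          push_neg at hc
          have h1 : ¬ E I p i := fun h => hc.1 (E_symm h)
          exact rel_trans hI hfull h1 hc.2 hmemI
        rcases hor with h | h
        · exact ⟨p, h, by omega⟩
        · exact ⟨q, h, by omega⟩
  · rw [Ideal.span_le]
    rintro _ ⟨j, hj, rfl⟩
    rw [SetLike.mem_coe]
    show X j ∈ I.colon ((Ideal.span {X i} : Ideal (MvPolynomial (Fin n) k)) : Set (MvPolynomial (Fin n) k))
    rw [Ideal.mem_colon_span_singleton, X_mul_X_eq]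
    exact E_symm hj

lemma le_colonVar (i : Fin n) : I ≤ colonVar I i :=
  fun _ hr => Ideal.mem_colon_span_singleton.mpr (Ideal.mul_mem_right _ _ hr)

lemma colonVar_isPrime (hI : IsMatroidal I 2) (hfull : FullSupported I) (i : Fin n) :
    (colonVar I i).IsPrime := by
  rw [colonVar_eq hI hfull i]
  exact span_X_isPrime _

lemma colonVar_eq_of_le (hI : IsMatroidal I 2) (hfull : FullSupported I) {u w : Fin n}
    (hle : colonVar I u ≤ colonVar I w) : colonVar I u = colonVar I w := by
  rw [colonVar_eq hI hfull u, colonVar_eq hI hfull w] at hle ⊢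
  have hN : {j | E I u j} ⊆ {j | E I w j} := by
    intro j hj
    exact X_mem_span_X_iff.mp (hle (Ideal.subset_span ⟨j, hj, rfl⟩))
  have huw : ¬ E I u w := by
    intro h
    exact not_E_self hI w (hN h)
  have hN' : {j | E I w j} ⊆ {j | E I u j} := by
    intro t ht
    by_contra hut
    have h1 : ¬ E I t u := fun h => hut (E_symm h)
    exact rel_trans hI hfull h1 huw (E_symm ht)
  rw [Set.Subset.antisymm hN hN']

lemma mk_smul_eq (r x : MvPolynomial (Fin n) k) :
    r • Ideal.Quotient.mk I x = Ideal.Quotient.mk I (r * x) := by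
  rw [← smul_eq_mul, ← Ideal.Quotient.mk_eq_mk, ← Ideal.Quotient.mk_eq_mk,
    Submodule.Quotient.mk_smul]

lemma colonVar_mem_ass (hI : IsMatroidal I 2) (hfull : FullSupported I) (i : Fin n) :
    colonVar I i ∈ associatedPrimes (MvPolynomial (Fin n) k) (MvPolynomial (Fin n) k ⧸ I) := by
  refine isAssociatedPrime_iff.mpr ⟨colonVar_isPrime hI hfull i, ⟨Ideal.Quotient.mk I (X i), ?_⟩⟩
  ext r
  rw [Submodule.mem_colon_singleton, Submodule.mem_bot, mk_smul_eq, Ideal.Quotient.eq_zero_iff_mem]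
  show r ∈ I.colon ((Ideal.span {X i} : Ideal (MvPolynomial (Fin n) k)) : Set (MvPolynomial (Fin n) k)) ↔ _
  rw [Ideal.mem_colon_span_singleton]

end StatementFive

open StatementFive in
open PaperDefs in
/-- Corollary 1.4, first part. Let `I` be an unmixed full-supported
matroidal ideal of degree `2` and let `m` be the number of blocks of the associated
partition, i.e. the number of factors in a minimal irredundant intersection
`I = ⋂_{i=1}^m (I : x_{v i})`. Then `|Ass(R/I)| = m`. -/
theorem statement5 {k : Type*} [Field k] {n : ℕ}
    (I : Ideal (MvPolynomial (Fin n) k))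
    (hI : IsMatroidal I 2) (hfull : FullSupported I) (hunmixed : IsUnmixed I)
    (m : ℕ) (v : Fin m → Fin n)
    (hrep : I = ⨅ i : Fin m, colonVar I (v i))
    (hirr : ∀ i₀ : Fin m, (⨅ i ∈ ({i₀}ᶜ : Set (Fin m)), colonVar I (v i)) ≠ I) :
    (associatedPrimes (MvPolynomial (Fin n) k) (MvPolynomial (Fin n) k ⧸ I)).ncard = m := by
  classical
  have hIle : ∀ i, I ≤ colonVar I (v i) := fun i => le_colonVar _
  have hinj : Function.Injective (fun i => colonVar I (v i) : Fin m → _) := by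
    intro i₀ i₁ hii
    simp only at hii
    by_contra hne
    apply hirr i₀
    apply le_antisymm
    · refine le_trans (le_iInf fun j => ?_) hrep.ge
      rcases eq_or_ne j i₀ with rfl | hj
      · exact le_trans (iInf₂_le i₁ (Set.mem_compl_singleton_iff.mpr (Ne.symm hne)))
          (le_of_eq hii.symm)
      · exact iInf₂_le j (Set.mem_compl_singleton_iff.mpr hj)
    · exact le_iInf₂ fun i _ => hIle i
  have hsub : associatedPrimes (MvPolynomial (Fin n) k) (MvPolynomial (Fin n) k ⧸ I)
      ⊆ Set.range (fun i => colonVar I (v i)) := by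
    intro p hp
    obtain ⟨hprime, y, hpx⟩ := isAssociatedPrime_iff.mp hp
    obtain ⟨x, rfl⟩ := Ideal.Quotient.mk_surjective y
    have hIp : I ≤ p := by
      intro r hr
      rw [hpx, Submodule.mem_colon_singleton, Submodule.mem_bot, mk_smul_eq,
        Ideal.Quotient.eq_zero_iff_mem]
      exact Ideal.mul_mem_right _ _ hr
    have hxI : x ∉ I := by
      intro hx
      have h0 : Ideal.Quotient.mk I x = 0 := Ideal.Quotient.eq_zero_iff_mem.mpr hx
      rw [h0] at hpx
      exact hprime.ne_top (hpx.trans (by ext r; simp [Submodule.mem_colon_singleton]))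
    obtain ⟨i₁, hi₁⟩ : ∃ i, x ∉ colonVar I (v i) := by
      by_contra hc
      push_neg at hc
      exact hxI (hrep ▸ (Submodule.mem_iInf _).mpr hc)
    have hple : p ≤ colonVar I (v i₁) := by
      intro r hr
      rw [hpx, Submodule.mem_colon_singleton, Submodule.mem_bot, mk_smul_eq,
        Ideal.Quotient.eq_zero_iff_mem] at hr
      have hcol : r * x ∈ colonVar I (v i₁) := le_colonVar _ hr
      rcases (colonVar_isPrime hI hfull (v i₁)).mem_or_mem hcol with h | h
      · exact h
      · exact absurd h hi₁
    obtain ⟨i₀, _, hi₀⟩ : ∃ i ∈ Finset.univ, colonVar I (v i) ≤ p := by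
      refine (Ideal.IsPrime.inf_le' hprime).mp ?_
      have huniv : Finset.univ.inf (fun i => colonVar I (v i)) = ⨅ i, colonVar I (v i) := by
        rw [Finset.inf_eq_iInf]
        exact iInf_congr fun i => iInf_pos (Finset.mem_univ i)
      rw [huniv, ← hrep]
      exact hIp
    have heq : colonVar I (v i₀) = colonVar I (v i₁) :=
      colonVar_eq_of_le hI hfull (le_trans hi₀ hple)
    refine ⟨i₁, le_antisymm ?_ hple⟩
    show colonVar I (v i₁) ≤ p
    rw [← heq]
    exact hi₀
  have hset : associatedPrimes (MvPolynomial (Fin n) k) (MvPolynomial (Fin n) k ⧸ I)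
      = Set.range (fun i => colonVar I (v i)) :=
    Set.Subset.antisymm hsub
      (Set.range_subset_iff.mpr fun i => colonVar_mem_ass hI hfull (v i))
  rw [hset]
  have hcoe : Set.range (fun i => colonVar I (v i))
      = ↑(Finset.univ.image (fun i => colonVar I (v i))) := by
    simp
  rw [hcoe, Set.ncard_coe_finset, Finset.card_image_of_injective _ hinj,
    Finset.card_univ, Fintype.card_fin]
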